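/- arXiv:1101.1990 — 2 statements merged into one kernel-verified Lean document; each statement's English description precedes it below -/
import Mathlib

section
/- (Corollary of Maitre's theorem, case p₁ = 1.) Let T > 0, let A and A₁ be real Banach spaces, and let B : A → A₁ be a (possibly nonlinear) compact map, i.e. B maps bounded subsets of A to relatively compact subsets of A₁. Let U be a set of strongly measurable functions u : (0,T) → A with sup_{u ∈ U} ∫₀^T ‖u(t)‖_A dt < ∞, and let V := {B∘u : u ∈ U}. Assume V is bounded in L^r(0,T; A₁) for some r > 1, and that each v ∈ V satisfies v(t) = v(0) + ∫₀ᵗ w_v(s) ds for a.e. t ∈ [0,T], where w_v ∈ L¹(0,T; A₁) and sup_{v ∈ V} ∫₀^T ‖w_v(t)‖_{A₁} dt < ∞. Then for every p ∈ [1,∞), V is relatively compact in L^p(0,T; A₁): every sequence in V has a subsequence converging in the norm of L^p(0,T; A₁). -/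
open Filter Topology MeasureTheory
open scoped ENNReal

set_option maxHeartbeats 1000000

private lemma totallyBounded_range_aux {X : Type*} [PseudoMetricSpace X]
    (x : ℕ → X)
    (h : ∀ ε : ℝ, 0 < ε → ∃ K : Set X, IsCompact K ∧ ∀ᶠ j in atTop, ∃ y ∈ K, dist (x j) y ≤ ε) :
    TotallyBounded (Set.range x) := by
  rw [Metric.totallyBounded_iff]
  intro ε hε
  obtain ⟨K, hK, hev⟩ := h (ε / 4) (by linarith)
  obtain ⟨N, hN⟩ := eventually_atTop.mp hev
  obtain ⟨t, ht, htK⟩ := Metric.totallyBounded_iff.mp hK.totallyBounded (ε / 4) (by linarith)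
  refine ⟨t ∪ x '' Set.Iic N, ht.union ((Set.finite_Iic N).image x), ?_⟩
  rintro _ ⟨j, rfl⟩
  rcases le_or_gt j N with hj | hj
  · exact Set.mem_biUnion (Set.mem_union_right _ ⟨j, hj, rfl⟩) (Metric.mem_ball_self hε)
  · obtain ⟨y, hyK, hy⟩ := hN j hj.le
    obtain ⟨z, hz, hyz⟩ := Set.mem_iUnion₂.mp (htK hyK)
    refine Set.mem_biUnion (Set.mem_union_left _ hz) ?_
    have hd : dist (x j) z ≤ ε / 4 + ε / 4 :=
      le_trans (dist_triangle _ y _) (add_le_add hy (le_of_lt (Metric.mem_ball.mp hyz)))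
    exact Metric.mem_ball.mpr (lt_of_le_of_lt hd (by linarith))

/-- Corollary of Maitre's theorem, case p₁ = 1: if B : A → A₁ is a (possibly nonlinear)
compact map, U is bounded in L¹(0,T;A), V = B∘U is bounded in L^r(0,T;A₁) for some r > 1,
and dV/dt is bounded in L¹(0,T;A₁), then V is relatively compact in L^p(0,T;A₁) for every
p ∈ [1,∞). -/
theorem stmt14
    {A A₁ : Type*} [NormedAddCommGroup A] [NormedSpace ℝ A] [CompleteSpace A]
    [NormedAddCommGroup A₁] [NormedSpace ℝ A₁] [CompleteSpace A₁]
    (T : ℝ) (hT : 0 < T)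
    (B : A → A₁)
    -- B is a compact map: it maps bounded sets to relatively compact sets
    (hB : ∀ s : Set A, Bornology.IsBounded s → IsCompact (closure (B '' s)))
    (U : Set (ℝ → A))
    -- the elements of U are strongly measurable on (0,T)
    (hUmeas : ∀ u ∈ U, AEStronglyMeasurable u (volume.restrict (Set.Ioc (0 : ℝ) T)))
    -- U is bounded in L¹(0,T;A)
    (hU1 : ∃ K : ℝ, ∀ u ∈ U,
      ∫⁻ t in Set.Ioc (0 : ℝ) T, (‖u t‖₊ : ℝ≥0∞) ≤ ENNReal.ofReal K)
    -- the elements of V = B∘U are strongly measurable on (0,T)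
    (hVmeas : ∀ u ∈ U,
      AEStronglyMeasurable (fun t => B (u t)) (volume.restrict (Set.Ioc (0 : ℝ) T)))
    -- V is bounded in L^r(0,T;A₁) for some r > 1
    (hVr : ∃ r : ℝ≥0∞, 1 < r ∧ ∃ K : ℝ, ∀ u ∈ U,
      eLpNorm (fun t => B (u t)) r (volume.restrict (Set.Ioc (0 : ℝ) T)) ≤ ENNReal.ofReal K)
    -- each v = B∘u ∈ V satisfies v(t) = v(0) + ∫₀ᵗ w_v(s) ds with w_v ∈ L¹(0,T;A₁),
    -- and sup_{v ∈ V} ‖w_v‖_{L¹(0,T;A₁)} < ∞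
    (hW : ∃ K : ℝ, ∀ u ∈ U, ∃ w : ℝ → A₁,
      IntegrableOn w (Set.Ioc (0 : ℝ) T) ∧
      (∀ᵐ t ∂volume.restrict (Set.Icc (0 : ℝ) T),
        B (u t) = B (u 0) + ∫ s in (0 : ℝ)..t, w s) ∧
      eLpNorm w 1 (volume.restrict (Set.Ioc (0 : ℝ) T)) ≤ ENNReal.ofReal K) :
    -- conclusion: for every p ∈ [1,∞), every sequence in V has a subsequence converging
    -- in the norm of L^p(0,T;A₁)
    ∀ p : ℝ≥0∞, 1 ≤ p → p ≠ ⊤ → ∀ u : ℕ → ℝ → A, (∀ n, u n ∈ U) →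
      ∃ ψ : ℕ → ℕ, StrictMono ψ ∧ ∃ g : ℝ → A₁,
        Tendsto
          (fun j =>
            eLpNorm (fun t => B (u (ψ j) t) - g t) p (volume.restrict (Set.Ioc (0 : ℝ) T)))
          atTop (𝓝 0) := by
  classical
  intro p hp1 hptop u hu
  set μ0 := volume.restrict (Set.Ioc (0 : ℝ) T) with hμ0
  obtain ⟨K₁, hK₁⟩ := hU1
  obtain ⟨r, hr1, K₂, hK₂⟩ := hVr
  obtain ⟨K₃, hK₃⟩ := hW
  choose w hwint hwae hwnorm using fun n : ℕ => hK₃ (u n) (hu n)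
  set K₃' : ℝ := max K₃ 0 with hK₃'def
  have hK₃'0 : 0 ≤ K₃' := le_max_right _ _
  set w' : ℕ → ℝ → A₁ := fun n => (Set.Ioc (0:ℝ) T).indicator (w n) with hw'def
  have hw'int : ∀ n, Integrable (w' n) := fun n =>
    (hwint n).integrable_indicator measurableSet_Ioc
  -- L¹ bound on w'
  have hwK : ∀ n, ∫ s, ‖w' n s‖ ≤ K₃' := by
    intro n
    have h1 : (fun s => ‖w' n s‖) = (Set.Ioc (0:ℝ) T).indicator (fun s => ‖w n s‖) := by
      funext s
      simp only [hw'def]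
      exact norm_indicator_eq_indicator_norm _ _
    rw [h1, integral_indicator measurableSet_Ioc]
    have h2 : ∫⁻ s in Set.Ioc (0:ℝ) T, (‖w n s‖₊ : ℝ≥0∞) ≤ ENNReal.ofReal K₃ := by
      have h := hwnorm n
      rwa [eLpNorm_one_eq_lintegral_enorm] at h
    have h3 : ∫ s in Set.Ioc (0:ℝ) T, ‖w n s‖ =
        (∫⁻ s in Set.Ioc (0:ℝ) T, (‖w n s‖₊ : ℝ≥0∞)).toReal :=
      integral_norm_eq_lintegral_enorm (hwint n).1
    rw [h3]
    calc (∫⁻ s in Set.Ioc (0:ℝ) T, (‖w n s‖₊ : ℝ≥0∞)).toReal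
        ≤ (ENNReal.ofReal K₃).toReal := ENNReal.toReal_mono ENNReal.ofReal_ne_top h2
      _ ≤ K₃' := by rw [ENNReal.toReal_ofReal']
  set F : ℕ → ℝ → A₁ := fun n t => B (u n 0) + ∫ s in (0:ℝ)..t, w' n s with hFdef
  set ν : ℕ → ℝ → ℝ := fun n t => ∫ s in Set.Ioc (0:ℝ) t, ‖w' n s‖ with hνdef
  have hwnormint : ∀ n, Integrable (fun s => ‖w' n s‖) := fun n => (hw'int n).norm
  have hν0 : ∀ n t, 0 ≤ ν n t := fun n t =>
    setIntegral_nonneg measurableSet_Ioc fun s _ => norm_nonneg _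
  have hνK : ∀ n t, ν n t ≤ K₃' := fun n t =>
    le_trans (setIntegral_le_integral (hwnormint n)
      (Eventually.of_forall fun s => norm_nonneg _)) (hwK n)
  have hνmono : ∀ n, Monotone (ν n) := by
    intro n s t hst
    exact setIntegral_mono_set (hwnormint n).integrableOn
      (Eventually.of_forall fun s => norm_nonneg _)
      (HasSubset.Subset.eventuallyLE (Set.Ioc_subset_Ioc_right hst))
  have hνadd : ∀ n {s t : ℝ}, 0 ≤ s → s ≤ t →
      ν n s + ∫ x in Set.Ioc s t, ‖w' n x‖ = ν n t := by
    intro n s t h0 hst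
    simp only [hνdef]
    rw [← setIntegral_union (Set.Ioc_disjoint_Ioc_of_le le_rfl) measurableSet_Ioc
      (hwnormint n).integrableOn (hwnormint n).integrableOn,
      Set.Ioc_union_Ioc_eq_Ioc h0 hst]
  have hFsub : ∀ n {s t : ℝ}, 0 ≤ s → s ≤ t → ‖F n t - F n s‖ ≤ ν n t - ν n s := by
    intro n s t h0 hst
    have h1 : F n t - F n s = ∫ x in s..t, w' n x := by
      simp only [hFdef, add_sub_add_left_eq_sub]
      rw [intervalIntegral.integral_interval_sub_left ((hw'int n).intervalIntegrable)
        ((hw'int n).intervalIntegrable)]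
    rw [h1]
    have h2 := intervalIntegral.norm_integral_le_integral_norm (f := w' n) (μ := volume) hst
    have h2' : (∫ x in s..t, ‖w' n x‖) = ∫ x in Set.Ioc s t, ‖w' n x‖ :=
      intervalIntegral.integral_of_le hst
    have h3 := hνadd n h0 hst
    linarith
  have hFcont : ∀ n, Continuous (F n) := fun n =>
    continuous_const.add ((hw'int n).continuous_primitive 0)
  -- a.e. identification of B ∘ u n with F n on (0,T]
  have hae : ∀ n, ∀ᵐ t ∂μ0, B (u n t) = F n t := by
    intro n
    have h2 := ae_restrict_of_ae_restrict_of_subset Set.Ioc_subset_Icc_self (hwae n)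
    filter_upwards [h2, ae_restrict_mem measurableSet_Ioc] with t ht hmem
    rw [ht]
    simp only [hFdef]
    congr 1
    rw [intervalIntegral.integral_of_le hmem.1.le, intervalIntegral.integral_of_le hmem.1.le]
    refine setIntegral_congr_fun measurableSet_Ioc fun s hs => ?_
    have hmem2 : s ∈ Set.Ioc (0:ℝ) T := ⟨hs.1, hs.2.trans hmem.2⟩
    exact (Set.indicator_of_mem hmem2 (w n)).symm
  have hμ0univ : μ0 Set.univ = ENNReal.ofReal T := by
    rw [hμ0, Measure.restrict_apply_univ, Real.volume_Ioc, sub_zero]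
  have hμ0ne : μ0 ≠ 0 := by
    rw [← Measure.measure_univ_ne_zero, hμ0univ]
    simp only [ne_eq, ENNReal.ofReal_eq_zero, not_le]
    exact hT
  have hμ0fin : μ0 Set.univ ≠ ∞ := by rw [hμ0univ]; exact ENNReal.ofReal_ne_top
  have hr0 : r ≠ 0 := (zero_lt_one.trans hr1).ne'
  set m : ℝ≥0∞ := μ0 Set.univ ^ (1 / r.toReal) with hmdef
  have hm0 : m ≠ 0 := by
    rw [hmdef]
    exact (ENNReal.rpow_pos (by rw [hμ0univ]; exact ENNReal.ofReal_pos.mpr hT) hμ0fin).ne'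
  have hmtop : m ≠ ∞ := ENNReal.rpow_ne_top_of_nonneg (by positivity) hμ0fin
  have hC₀top : ENNReal.ofReal K₂ / m + 1 ≠ ∞ := by
    have h1 : ENNReal.ofReal K₂ / m ≠ ∞ := (ENNReal.div_lt_top ENNReal.ofReal_ne_top hm0).ne
    exact ENNReal.add_ne_top.mpr ⟨h1, ENNReal.one_ne_top⟩
  set C₀ : ℝ := (ENNReal.ofReal K₂ / m + 1).toReal with hC₀def
  have hC₀0 : 0 ≤ C₀ := ENNReal.toReal_nonneg
  have hFr : ∀ n, eLpNorm (F n) r μ0 ≤ ENNReal.ofReal K₂ := by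
    intro n
    rw [← eLpNorm_congr_ae (hae n)]
    exact hK₂ (u n) (hu n)
  have hexists_small : ∀ n, ∃ s ∈ Set.Ioc (0:ℝ) T, ‖F n s‖ ≤ C₀ := by
    intro n
    by_contra hcon
    push_neg at hcon
    have hael : ∀ᵐ t ∂μ0, ‖(fun _ : ℝ => C₀) t‖ ≤ ‖F n t‖ := by
      rw [hμ0]
      refine ae_restrict_of_forall_mem measurableSet_Ioc fun t ht => ?_
      simp only [Real.norm_of_nonneg hC₀0]
      exact (hcon t ht).le
    have h1 : eLpNorm (fun _ : ℝ => C₀) r μ0 ≤ ENNReal.ofReal K₂ :=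
      le_trans (eLpNorm_mono_ae hael) (hFr n)
    rw [eLpNorm_const _ hr0 hμ0ne] at h1
    have h2 : ‖C₀‖ₑ = ENNReal.ofReal K₂ / m + 1 := by
      rw [← ofReal_norm, Real.norm_of_nonneg hC₀0, hC₀def,
        ENNReal.ofReal_toReal hC₀top]
    rw [h2, ← hmdef, add_mul, one_mul, ENNReal.div_mul_cancel hm0 hmtop] at h1
    have h3 : ENNReal.ofReal K₂ < ENNReal.ofReal K₂ + m :=
      ENNReal.lt_add_right ENNReal.ofReal_ne_top hm0
    exact absurd h1 (by simpa using h3.not_ge)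
  set C : ℝ := C₀ + K₃' with hCdef
  have hC0 : 0 ≤ C := by positivity
  have hFbound : ∀ n, ∀ t ∈ Set.Ioc (0:ℝ) T, ‖F n t‖ ≤ C := by
    intro n t ht
    obtain ⟨s, hs, hsle⟩ := hexists_small n
    have hdiff : ‖F n t - F n s‖ ≤ K₃' := by
      rcases le_total s t with h | h
      · have h4 := hFsub n hs.1.le h
        have h5 := hν0 n s; have h6 := hνK n t; linarith
      · rw [norm_sub_rev]
        have h4 := hFsub n ht.1.le h
        have h5 := hν0 n t; have h6 := hνK n s; linarith
    calc ‖F n t‖ = ‖F n s + (F n t - F n s)‖ := by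
          rw [show F n s + (F n t - F n s) = F n t from by abel]
      _ ≤ ‖F n s‖ + ‖F n t - F n s‖ := norm_add_le _ _
      _ ≤ C := by rw [hCdef]; exact add_le_add hsle hdiff
  -- a dense sequence of reals (the rationals)
  set q : ℕ → ℝ := fun mi => (((Denumerable.eqv ℚ).symm mi : ℚ) : ℝ) with hqdef
  have hqdense : DenseRange q := by
    have hsurj : Function.Surjective (Denumerable.eqv ℚ).symm := (Denumerable.eqv ℚ).symm.surjective
    exact Rat.denseRange_cast.comp hsurj.denseRange Rat.continuous_coe_real
  -- stage 1: extract a subsequence along which ν converges at all rationals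
  have hScomp : IsCompact (Set.pi Set.univ fun _ : ℕ => Set.Icc (0:ℝ) K₃') :=
    isCompact_univ_pi fun _ => isCompact_Icc
  obtain ⟨L, hLmem, ψ₁, hψ₁, hψ₁tendsto⟩ :=
    hScomp.tendsto_subseq (x := fun n mi => ν n (q mi))
      (fun n => Set.mem_univ_pi.mpr fun mi => ⟨hν0 _ _, hνK _ _⟩)
  have hν1 : ∀ mi : ℕ, Tendsto (fun j => ν (ψ₁ j) (q mi)) atTop (𝓝 (L mi)) := fun mi =>
    tendsto_pi_nhds.mp hψ₁tendsto mi
  have hL0 : ∀ mi, L mi ∈ Set.Icc (0:ℝ) K₃' := fun mi => (Set.mem_univ_pi.mp hLmem) mi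
  have hLmono : ∀ {a b : ℕ}, q a ≤ q b → L a ≤ L b := by
    intro a b hab
    exact le_of_tendsto_of_tendsto' (hν1 a) (hν1 b) fun j => hνmono _ hab
  -- the monotone "modulus" function G
  set G : ℝ → ℝ := fun t => sSup (insert 0 {x | ∃ mi, q mi < t ∧ x = L mi}) with hGdef
  have hbdd : ∀ t : ℝ, BddAbove (insert 0 {x | ∃ mi, q mi < t ∧ x = L mi}) := by
    intro t
    refine ⟨K₃', ?_⟩
    intro y hy
    rcases Set.mem_insert_iff.mp hy with rfl | hy'
    · exact hK₃'0
    · obtain ⟨mi, _, rfl⟩ := hy'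
      exact (hL0 mi).2
  have hGmono : Monotone G := by
    intro s t hst
    refine csSup_le_csSup (hbdd t) ⟨0, Set.mem_insert _ _⟩ ?_
    intro y hy
    rcases Set.mem_insert_iff.mp hy with rfl | hy'
    · exact Set.mem_insert _ _
    · obtain ⟨mi, hmi, rfl⟩ := hy'
      exact Set.mem_insert_iff.mpr (Or.inr ⟨mi, hmi.trans_le hst, rfl⟩)
  have hGle : ∀ {mi : ℕ} {t : ℝ}, q mi < t → L mi ≤ G t := fun {mi t} h =>
    le_csSup (hbdd t) (Set.mem_insert_iff.mpr (Or.inr ⟨mi, h, rfl⟩))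
  have hGub : ∀ {t : ℝ} {z : ℝ}, 0 ≤ z → (∀ mi, q mi < t → L mi ≤ z) → G t ≤ z := by
    intro t z h0 hz
    refine csSup_le ⟨0, Set.mem_insert _ _⟩ ?_
    intro y hy
    rcases Set.mem_insert_iff.mp hy with rfl | hy'
    · exact h0
    · obtain ⟨mi, hmi, rfl⟩ := hy'
      exact hz mi hmi
  set Good : Set ℝ := {t | t ∈ Set.Ioo 0 T ∧ ContinuousAt G t} with hGooddef
  have hGoodwin : ∀ t ∈ Good, ∀ ε : ℝ, 0 < ε → ∃ a b : ℕ,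
      q a ∈ Set.Ioo (0:ℝ) T ∧ q b ∈ Set.Ioo (0:ℝ) T ∧ q a < t ∧ t < q b ∧ L b - L a < ε := by
    intro t ht ε hε
    obtain ⟨htIoo, htc⟩ := ht
    rw [Metric.continuousAt_iff] at htc
    obtain ⟨δ₀, hδ₀, hδ⟩ := htc (ε/3) (by linarith)
    set δ := min δ₀ (min t (T - t)) with hδdef
    have hδpos : 0 < δ := lt_min hδ₀ (lt_min htIoo.1 (by linarith [htIoo.2]))
    have hδδ₀ : δ ≤ δ₀ := min_le_left _ _
    have hδt : δ ≤ t := le_trans (min_le_right _ _) (min_le_left _ _)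
    have hδTt : δ ≤ T - t := le_trans (min_le_right _ _) (min_le_right _ _)
    obtain ⟨a, ha⟩ : ∃ a, q a ∈ Set.Ioo (t - δ) t := by
      have hne : (Set.Ioo (t - δ) t).Nonempty := ⟨t - δ/2, by constructor <;> linarith⟩
      exact hqdense.exists_mem_open isOpen_Ioo hne
    obtain ⟨b, hb⟩ : ∃ b, q b ∈ Set.Ioo t (t + δ) := by
      have hne : (Set.Ioo t (t + δ)).Nonempty := ⟨t + δ/2, by constructor <;> linarith⟩
      exact hqdense.exists_mem_open isOpen_Ioo hne
    refine ⟨a, b, ⟨by linarith [ha.1], by linarith [ha.2, htIoo.2]⟩,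
      ⟨by linarith [hb.1, htIoo.1], by linarith [hb.2]⟩, ha.2, hb.1, ?_⟩
    set s := (q b + (t + δ)) / 2 with hsdef
    have hs1 : q b < s := by rw [hsdef]; linarith [hb.2]
    have hs2 : s - t < δ := by rw [hsdef]; linarith [hb.2]
    have hs3 : 0 < s - t := by rw [hsdef]; linarith [hb.1]
    have hLb : L b ≤ G s := hGle hs1
    have hLa : G (q a) ≤ L a := hGub (hL0 a).1 fun mi hmi => hLmono hmi.le
    have hd1 : dist (G s) (G t) < ε/3 := hδ (by rw [Real.dist_eq, abs_lt]; constructor <;> linarith)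
    have hd2 : dist (G (q a)) (G t) < ε/3 := hδ
      (by rw [Real.dist_eq, abs_lt]; constructor <;> linarith [ha.1, ha.2])
    rw [Real.dist_eq, abs_lt] at hd1 hd2
    obtain ⟨hd1a, hd1b⟩ := hd1
    obtain ⟨hd2a, hd2b⟩ := hd2
    linarith
  -- Markov inequality for the L¹ bound on u
  have hMarkov : ∀ n (M : ℝ≥0∞), M ≠ 0 → M ≠ ∞ →
      μ0 {s | M ≤ (‖u n s‖₊ : ℝ≥0∞)} ≤ ENNReal.ofReal K₁ / M := by
    intro n M h0 htop
    calc μ0 {s | M ≤ (‖u n s‖₊ : ℝ≥0∞)}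
        ≤ (∫⁻ s, (‖u n s‖₊ : ℝ≥0∞) ∂μ0) / M :=
          meas_ge_le_lintegral_div (hUmeas (u n) (hu n)).enorm h0 htop
      _ ≤ ENNReal.ofReal K₁ / M := ENNReal.div_le_div_right (hK₁ (u n) (hu n)) M
  -- at good points, the values (along ψ₁) are eventually near a compact set
  have hnear : ∀ t ∈ Good, ∀ ε : ℝ, 0 < ε → ∃ K : Set A₁, IsCompact K ∧
      ∀ᶠ j in atTop, ∃ y ∈ K, dist (F (ψ₁ j) t) y ≤ ε := by
    intro t ht ε hε
    obtain ⟨a, b, hqa, hqb, hat, htb, hLab⟩ := hGoodwin t ht (ε/2) (by linarith)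
    have hba : 0 < q b - q a := by linarith
    have hd0 : ENNReal.ofReal (q b - q a) ≠ 0 := by
      simp only [ne_eq, ENNReal.ofReal_eq_zero, not_le]; linarith
    obtain ⟨Mn, hMn⟩ := ENNReal.exists_nat_gt
      (ENNReal.div_lt_top ENNReal.ofReal_ne_top hd0).ne
    have hMn0 : ((Mn : ℕ) : ℝ≥0∞) ≠ 0 :=
      (lt_of_le_of_lt (zero_le) hMn).ne'
    have h1 : ENNReal.ofReal K₁ < (Mn : ℝ≥0∞) * ENNReal.ofReal (q b - q a) :=
      (ENNReal.div_lt_iff (Or.inl hd0) (Or.inl ENNReal.ofReal_ne_top)).mp hMn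
    have hKM : ENNReal.ofReal K₁ / (Mn : ℝ≥0∞) < ENNReal.ofReal (q b - q a) :=
      (ENNReal.div_lt_iff (Or.inl hMn0) (Or.inl (ENNReal.natCast_ne_top Mn))).mpr
        (by rwa [mul_comm] at h1)
    refine ⟨closure (B '' Metric.closedBall 0 (Mn : ℝ)), hB _ Metric.isBounded_closedBall, ?_⟩
    have htend : Tendsto (fun j => ν (ψ₁ j) (q b) - ν (ψ₁ j) (q a)) atTop (𝓝 (L b - L a)) :=
      (hν1 b).sub (hν1 a)
    filter_upwards [htend.eventually_lt_const (show L b - L a < ε by linarith)] with j hj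
    set n := ψ₁ j with hndef
    have hexs : ∃ s ∈ Set.Ioc (q a) (q b),
        (‖u n s‖₊ : ℝ≥0∞) < (Mn : ℝ≥0∞) ∧ B (u n s) = F n s := by
      by_contra hcon
      push_neg at hcon
      have hsub : Set.Ioc (q a) (q b) ⊆
          {s | (Mn : ℝ≥0∞) ≤ (‖u n s‖₊ : ℝ≥0∞)} ∪ {s | ¬ (B (u n s) = F n s)} := by
        intro s hs
        rcases le_or_gt ((Mn : ℕ) : ℝ≥0∞) (‖u n s‖₊ : ℝ≥0∞) with h | h
        · exact Or.inl h
        · exact Or.inr (hcon s hs h)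
      have hIocsub : Set.Ioc (q a) (q b) ⊆ Set.Ioc (0:ℝ) T :=
        Set.Ioc_subset_Ioc hqa.1.le hqb.2.le
      have hμIoc : μ0 (Set.Ioc (q a) (q b)) = ENNReal.ofReal (q b - q a) := by
        rw [hμ0, Measure.restrict_apply measurableSet_Ioc,
          Set.inter_eq_self_of_subset_left hIocsub, Real.volume_Ioc]
      have hnull : μ0 {s | ¬ (B (u n s) = F n s)} = 0 := by
        have h := hae n; rwa [ae_iff] at h
      have hle : μ0 (Set.Ioc (q a) (q b)) ≤ ENNReal.ofReal K₁ / (Mn : ℝ≥0∞) + 0 := by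
        calc μ0 (Set.Ioc (q a) (q b)) ≤ _ := measure_mono hsub
          _ ≤ _ + _ := measure_union_le _ _
          _ ≤ _ := add_le_add (hMarkov n _ hMn0 (ENNReal.natCast_ne_top Mn)) hnull.le
      rw [add_zero, hμIoc] at hle
      exact absurd (lt_of_le_of_lt hle hKM) (lt_irrefl _)
    obtain ⟨s, hsmem, hslt, hseq⟩ := hexs
    refine ⟨F n s, ?_, ?_⟩
    · rw [← hseq]
      refine subset_closure ⟨u n s, ?_, rfl⟩
      rw [Metric.mem_closedBall, dist_zero_right]
      have h2 := ENNReal.toReal_mono (ENNReal.natCast_ne_top Mn) hslt.le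
      simpa using h2
    · rw [dist_eq_norm]
      have h0s : (0:ℝ) < s := lt_trans hqa.1 hsmem.1
      have hosc : ‖F n t - F n s‖ ≤ ν n (q b) - ν n (q a) := by
        rcases le_total s t with h | h
        · have h4 := hFsub n h0s.le h
          have h5 := hνmono n htb.le
          have h6 := hνmono n hsmem.1.le
          linarith
        · rw [norm_sub_rev]
          have h4 := hFsub n (lt_trans hqa.1 hat).le h
          have h5 := hνmono n hsmem.2
          have h6 := hνmono n hat.le
          linarith
      linarith
  -- almost every point of (0,T] is good
  have hGoodae : ∀ᵐ t ∂μ0, t ∈ Good := by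
    have hcnt : Set.Countable ({T} ∪ {t : ℝ | ¬ContinuousAt G t}) :=
      (Set.countable_singleton T).union hGmono.countable_not_continuousAt
    have hvol : volume ({T} ∪ {t : ℝ | ¬ContinuousAt G t}) = 0 := hcnt.measure_zero _
    rw [hμ0]
    filter_upwards [ae_restrict_of_ae (measure_eq_zero_iff_ae_notMem.mp hvol),
      ae_restrict_mem measurableSet_Ioc] with t htS htmem
    refine ⟨⟨htmem.1, lt_of_le_of_ne htmem.2 fun h => htS (Or.inl h)⟩, ?_⟩
    by_contra h
    exact htS (Or.inr h)
  have hGoodne : Good.Nonempty := by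
    by_contra h
    rw [Set.not_nonempty_iff_eq_empty] at h
    have h1 := hGoodae
    rw [h] at h1
    simp only [Set.mem_empty_iff_false] at h1
    have h0 : μ0 {a : ℝ | ¬False} = 0 := ae_iff.mp h1
    simp only [not_false_eq_true, Set.setOf_true] at h0
    rw [hμ0univ] at h0
    simp only [ENNReal.ofReal_eq_zero, not_le] at h0
    linarith
  -- a countable dense subset of the good points
  obtain ⟨D₂0, hD₂c, hD₂d⟩ := TopologicalSpace.exists_countable_dense (↥Good)
  set D₂ : Set ℝ := Subtype.val '' D₂0 with hD₂def
  have hD₂sub : D₂ ⊆ Good := by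
    rintro _ ⟨⟨x, hx⟩, _, rfl⟩
    exact hx
  have hD₂cnt : D₂.Countable := hD₂c.image _
  have hD₂cl : Good ⊆ closure D₂ := by
    intro x hx
    have h1 : (⟨x, hx⟩ : ↥Good) ∈ closure D₂0 := hD₂d _
    exact image_closure_subset_closure_image continuous_subtype_val ⟨⟨x, hx⟩, h1, rfl⟩
  have hD₂ne : D₂.Nonempty := by
    obtain ⟨x, hx⟩ := hGoodne
    have h1 := hD₂cl hx
    rcases Set.eq_empty_or_nonempty D₂ with h | h
    · rw [h, closure_empty] at h1
      exact absurd h1 (Set.notMem_empty x)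
    · exact h
  obtain ⟨e, he⟩ := hD₂cnt.exists_eq_range hD₂ne
  have hegood : ∀ mi : ℕ, e mi ∈ Good := fun mi => hD₂sub (he ▸ Set.mem_range_self mi)
  -- stage 2: extract a further subsequence along which F converges at points of D₂
  have hcompact2 : IsCompact (Set.pi Set.univ fun mi : ℕ =>
      closure (Set.range fun j => F (ψ₁ j) (e mi))) := by
    refine isCompact_univ_pi fun mi => ?_
    rw [isCompact_iff_totallyBounded_isComplete]
    exact ⟨(totallyBounded_range_aux _ (hnear (e mi) (hegood mi))).closure,
      isClosed_closure.isComplete⟩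
  obtain ⟨ℓ, hℓmem, ψ₂, hψ₂, hψ₂t⟩ := hcompact2.tendsto_subseq
    (x := fun j mi => F (ψ₁ j) (e mi))
    (fun j => Set.mem_univ_pi.mpr fun mi => subset_closure (Set.mem_range_self j))
  set φ : ℕ → ℕ := ψ₁ ∘ ψ₂ with hφdef
  have hφmono : StrictMono φ := hψ₁.comp hψ₂
  have he2 : ∀ mi, Tendsto (fun j => F (φ j) (e mi)) atTop (𝓝 (ℓ mi)) := fun mi =>
    tendsto_pi_nhds.mp hψ₂t mi
  have hν2 : ∀ mi, Tendsto (fun j => ν (φ j) (q mi)) atTop (𝓝 (L mi)) := fun mi =>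
    (hν1 mi).comp hψ₂.tendsto_atTop
  -- stage 3: convergence at every good point
  have hconv : ∀ t ∈ Good, ∃ z : A₁, Tendsto (fun j => F (φ j) t) atTop (𝓝 z) := by
    intro t ht
    apply cauchySeq_tendsto_of_complete
    rw [Metric.cauchySeq_iff]
    intro ε hε
    obtain ⟨a, b, hqa, hqb, hat, htb, hLab⟩ := hGoodwin t ht (ε/4) (by linarith)
    obtain ⟨d, hdD₂, hdmem⟩ : ∃ d, d ∈ D₂ ∧ d ∈ Set.Ioo (q a) (q b) := by
      have h1 : t ∈ closure D₂ := hD₂cl ht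
      obtain ⟨d, hd1, hd2⟩ := (mem_closure_iff.mp h1) (Set.Ioo (q a) (q b)) isOpen_Ioo ⟨hat, htb⟩
      exact ⟨d, hd2, hd1⟩
    obtain ⟨mi, rfl⟩ : ∃ mi, e mi = d := by
      have h1 : d ∈ Set.range e := he ▸ hdD₂
      obtain ⟨mi, hmi⟩ := h1
      exact ⟨mi, hmi⟩
    have h3 : Tendsto (fun j => ν (φ j) (q b) - ν (φ j) (q a)) atTop (𝓝 (L b - L a)) :=
      (hν2 b).sub (hν2 a)
    obtain ⟨N2, hN2⟩ := eventually_atTop.mp (h3.eventually_lt_const hLab)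
    have h5 := (he2 mi).cauchySeq
    rw [Metric.cauchySeq_iff] at h5
    obtain ⟨N1, hN1⟩ := h5 (ε/4) (by linarith)
    refine ⟨max N1 N2, fun i hi j hj => ?_⟩
    have hosci : ∀ k, N2 ≤ k → dist (F (φ k) t) (F (φ k) (e mi)) ≤ ε/4 := by
      intro k hk
      rw [dist_eq_norm]
      have h6 : ‖F (φ k) t - F (φ k) (e mi)‖ ≤ ν (φ k) (q b) - ν (φ k) (q a) := by
        rcases le_total (e mi) t with h | h
        · have h4 := hFsub (φ k) (lt_trans hqa.1 hdmem.1).le h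
          have h7 := hνmono (φ k) htb.le
          have h8 := hνmono (φ k) hdmem.1.le
          linarith
        · rw [norm_sub_rev]
          have h4 := hFsub (φ k) (lt_trans hqa.1 hat).le h
          have h7 := hνmono (φ k) hdmem.2.le
          have h8 := hνmono (φ k) hat.le
          linarith
      linarith [hN2 k hk]
    have hti := hosci i (le_trans (le_max_right _ _) hi)
    have htj := hosci j (le_trans (le_max_right _ _) hj)
    have htij := hN1 i (le_trans (le_max_left _ _) hi) j (le_trans (le_max_left _ _) hj)
    have htj' : dist (F (φ j) (e mi)) (F (φ j) t) ≤ ε/4 := by rwa [dist_comm]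
    calc dist (F (φ i) t) (F (φ j) t)
        ≤ dist (F (φ i) t) (F (φ i) (e mi)) + dist (F (φ i) (e mi)) (F (φ j) (e mi)) +
            dist (F (φ j) (e mi)) (F (φ j) t) := dist_triangle4 _ _ _ _
      _ < ε := by linarith
  set g : ℝ → A₁ := fun t =>
    if h : ∃ z : A₁, Tendsto (fun j => F (φ j) t) atTop (𝓝 z) then h.choose else 0 with hgdef
  have hgt : ∀ t ∈ Good, Tendsto (fun j => F (φ j) t) atTop (𝓝 (g t)) := by
    intro t ht
    have h := hconv t ht
    have h1 : g t = h.choose := by simp only [hgdef]; rw [dif_pos h]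
    rw [h1]
    exact h.choose_spec
  refine ⟨φ, hφmono, g, ?_⟩
  have hp0 : p ≠ 0 := (lt_of_lt_of_le zero_lt_one hp1).ne'
  have hpt0 : 0 < p.toReal := ENNReal.toReal_pos hp0 hptop
  have haet : ∀ᵐ t ∂μ0, Tendsto (fun j => F (φ j) t) atTop (𝓝 (g t)) := by
    filter_upwards [hGoodae] with t ht using hgt t ht
  have hgmeas : AEStronglyMeasurable g μ0 :=
    aestronglyMeasurable_of_tendsto_ae atTop (fun j => (hFcont (φ j)).aestronglyMeasurable) haet
  have hgbd : ∀ᵐ t ∂μ0, ∀ j,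
      (‖F (φ j) t - g t‖₊ : ℝ≥0∞) ^ p.toReal ≤ ENNReal.ofReal (2 * C) ^ p.toReal := by
    have hmem : ∀ᵐ t ∂μ0, t ∈ Set.Ioc (0:ℝ) T := by
      rw [hμ0]; exact ae_restrict_mem measurableSet_Ioc
    filter_upwards [hGoodae, hmem] with t ht htmem
    intro j
    have h1 : ∀ k, ‖F (φ k) t‖ ≤ C := fun k => hFbound (φ k) t htmem
    have h2 : ‖g t‖ ≤ C := le_of_tendsto (hgt t ht).norm (Eventually.of_forall h1)
    have h3 : ‖F (φ j) t - g t‖ ≤ 2 * C := by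
      calc ‖F (φ j) t - g t‖ ≤ ‖F (φ j) t‖ + ‖g t‖ := norm_sub_le _ _
        _ ≤ 2 * C := by linarith [h1 j]
    refine ENNReal.rpow_le_rpow ?_ hpt0.le
    rw [← enorm_eq_nnnorm, ← ofReal_norm]
    exact ENNReal.ofReal_le_ofReal h3
  have haelim : ∀ᵐ t ∂μ0,
      Tendsto (fun j => (‖F (φ j) t - g t‖₊ : ℝ≥0∞) ^ p.toReal) atTop (𝓝 0) := by
    filter_upwards [haet] with t ht
    have h1 : Tendsto (fun j => ‖F (φ j) t - g t‖) atTop (𝓝 0) :=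
      tendsto_iff_norm_sub_tendsto_zero.mp ht
    have h2 : Tendsto (fun j => ENNReal.ofReal ‖F (φ j) t - g t‖) atTop (𝓝 0) := by
      have h := (ENNReal.continuous_ofReal.tendsto 0).comp h1
      simpa [Function.comp_def] using h
    have h3 : Tendsto (fun j => ENNReal.ofReal ‖F (φ j) t - g t‖ ^ p.toReal) atTop
        (𝓝 ((0 : ℝ≥0∞) ^ p.toReal)) :=
      ((ENNReal.continuous_rpow_const).tendsto 0).comp h2
    rw [ENNReal.zero_rpow_of_pos hpt0] at h3
    simpa [← enorm_eq_nnnorm, ofReal_norm] using h3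
  have hmeasj : ∀ j, AEMeasurable (fun t => (‖F (φ j) t - g t‖₊ : ℝ≥0∞) ^ p.toReal) μ0 := by
    intro j
    exact Measurable.comp_aemeasurable (ENNReal.continuous_rpow_const.measurable)
      (((hFcont (φ j)).aestronglyMeasurable.sub hgmeas).enorm)
  have hbint : ∫⁻ _t, ENNReal.ofReal (2 * C) ^ p.toReal ∂μ0 ≠ ∞ := by
    rw [lintegral_const]
    exact ENNReal.mul_ne_top (ENNReal.rpow_ne_top_of_nonneg hpt0.le ENNReal.ofReal_ne_top) hμ0fin
  have hlim := tendsto_lintegral_of_dominated_convergence' (μ := μ0)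
    (F := fun j t => (‖F (φ j) t - g t‖₊ : ℝ≥0∞) ^ p.toReal) (f := fun _ => 0)
    (bound := fun _ => ENNReal.ofReal (2 * C) ^ p.toReal) hmeasj
    (fun j => hgbd.mono fun t ht => ht j) hbint haelim
  rw [lintegral_zero] at hlim
  have key : ∀ j, eLpNorm (fun t => B (u (φ j) t) - g t) p μ0 =
      (∫⁻ t, (‖F (φ j) t - g t‖₊ : ℝ≥0∞) ^ p.toReal ∂μ0) ^ (1 / p.toReal) := by
    intro j
    have hcongr : (fun t => B (u (φ j) t) - g t) =ᵐ[μ0] fun t => F (φ j) t - g t :=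
      (hae (φ j)).mono fun t ht =>
        show B (u (φ j) t) - g t = F (φ j) t - g t from by rw [ht]
    rw [eLpNorm_congr_ae hcongr, eLpNorm_eq_lintegral_rpow_enorm_toReal hp0 hptop]; rfl
  simp only [key]
  have hfinal := ((ENNReal.continuous_rpow_const (y := 1 / p.toReal)).tendsto 0).comp hlim
  rw [ENNReal.zero_rpow_of_pos (by positivity)] at hfinal
  exact hfinal
end

section
/- (Corollary of Maitre's theorem, case p₁ > 1.) Let T > 0, let A and A₁ be real Banach spaces, let 1 < p₁ ≤ ∞, and let B : A → A₁ be a (possibly nonlinear) compact map, i.e. B maps bounded subsets of A to relatively compact subsets of A₁. Let U be a set of strongly measurable functions u : (0,T) → A with sup_{u ∈ U} ∫₀^T ‖u(t)‖_A dt < ∞, and let V := {B∘u : u ∈ U}. Assume V is bounded in L^r(0,T; A₁) for some r > 1, and that each v ∈ V satisfies v(t) = v(0) + ∫₀ᵗ w_v(s) ds for a.e. t ∈ [0,T], where w_v ∈ L^{p₁}(0,T; A₁) and sup_{v ∈ V} ‖w_v‖_{L^{p₁}(0,T;A₁)} < ∞. Then V is relatively compact in C([0,T]; A₁): every sequence in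 V has a subsequence whose continuous representatives converge uniformly on [0,T] in the norm of A₁. -/
open Filter Topology MeasureTheory
open scoped ENNReal

lemma aux_delta {C e : ℝ} (hC : 0 ≤ C) (he : 0 < e) {ε : ℝ} (hε : 0 < ε) :
    ∃ δ > 0, ∀ d : ℝ, 0 ≤ d → d < δ → C * d ^ e < ε := by
  refine ⟨(ε / (C + 1)) ^ (1 / e), Real.rpow_pos_of_pos (by positivity) _, fun d hd hdlt => ?_⟩
  have h1 : d ^ e < ((ε / (C + 1)) ^ (1 / e)) ^ e := Real.rpow_lt_rpow hd hdlt he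
  rw [← Real.rpow_mul (by positivity), one_div_mul_cancel he.ne', Real.rpow_one] at h1
  calc C * d ^ e ≤ C * (ε / (C + 1)) := mul_le_mul_of_nonneg_left h1.le hC
    _ < (C + 1) * (ε / (C + 1)) := by
        apply mul_lt_mul_of_pos_right (by linarith) (by positivity)
    _ = ε := by field_simp

lemma aux_holder {A₁ : Type*} [NormedAddCommGroup A₁] [NormedSpace ℝ A₁]
    (T : ℝ) (p₁ : ℝ≥0∞) (hp₁ : 1 ≤ p₁) (w : ℝ → A₁)
    (hw : IntegrableOn w (Set.Ioc (0:ℝ) T))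
    (K : ℝ) (hK : eLpNorm w p₁ (volume.restrict (Set.Ioc (0:ℝ) T)) ≤ ENNReal.ofReal K)
    {s t : ℝ} (hs : 0 ≤ s) (hst : s ≤ t) (htT : t ≤ T) :
    (‖∫ x in s..t, w x‖₊ : ℝ≥0∞) ≤
      ENNReal.ofReal K * ENNReal.ofReal (t - s) ^ (1 - 1 / p₁.toReal) := by
  have hsub : Set.Ioc s t ⊆ Set.Ioc (0:ℝ) T := Set.Ioc_subset_Ioc hs htT
  have hwst : AEStronglyMeasurable w (volume.restrict (Set.Ioc s t)) :=
    (hw.mono_set hsub).aestronglyMeasurable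
  rw [intervalIntegral.integral_of_le hst]
  calc (‖∫ x in Set.Ioc s t, w x‖₊ : ℝ≥0∞)
      ≤ ∫⁻ x in Set.Ioc s t, ‖w x‖₊ := enorm_integral_le_lintegral_enorm _
    _ = eLpNorm w 1 (volume.restrict (Set.Ioc s t)) := by
        rw [eLpNorm_one_eq_lintegral_enorm]; rfl
    _ ≤ eLpNorm w p₁ (volume.restrict (Set.Ioc s t)) *
        (volume.restrict (Set.Ioc s t)) Set.univ ^ (1 / (1:ℝ≥0∞).toReal - 1 / p₁.toReal) :=
        eLpNorm_le_eLpNorm_mul_rpow_measure_univ hp₁ hwst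
    _ ≤ ENNReal.ofReal K * ENNReal.ofReal (t - s) ^ (1 - 1 / p₁.toReal) := by
        apply mul_le_mul'
        · exact le_trans (eLpNorm_mono_measure _ (Measure.restrict_mono hsub le_rfl)) hK
        · rw [Measure.restrict_apply_univ, Real.volume_Ioc, ENNReal.toReal_one]
          norm_num


/-- Corollary of Maitre's theorem, case p₁ > 1: if B : A → A₁ is a (possibly nonlinear)
compact map, U is bounded in L¹(0,T;A), V = B∘U is bounded in L^r(0,T;A₁) for some r > 1,
and dV/dt is bounded in L^{p₁}(0,T;A₁) with p₁ > 1, then V is relatively compact in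
C([0,T];A₁). -/
theorem stmt15
    {A A₁ : Type*} [NormedAddCommGroup A] [NormedSpace ℝ A] [CompleteSpace A]
    [NormedAddCommGroup A₁] [NormedSpace ℝ A₁] [CompleteSpace A₁]
    (T : ℝ) (hT : 0 < T)
    (p₁ : ℝ≥0∞) (hp₁ : 1 < p₁)
    (B : A → A₁)
    -- B is a compact map: it maps bounded sets to relatively compact sets
    (hB : ∀ s : Set A, Bornology.IsBounded s → IsCompact (closure (B '' s)))
    (U : Set (ℝ → A))
    -- the elements of U are strongly measurable on (0,T)
    (hUmeas : ∀ u ∈ U, AEStronglyMeasurable u (volume.restrict (Set.Ioc (0 : ℝ) T)))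
    -- U is bounded in L¹(0,T;A)
    (hU1 : ∃ K : ℝ, ∀ u ∈ U,
      ∫⁻ t in Set.Ioc (0 : ℝ) T, (‖u t‖₊ : ℝ≥0∞) ≤ ENNReal.ofReal K)
    -- the elements of V = B∘U are strongly measurable on (0,T)
    (hVmeas : ∀ u ∈ U,
      AEStronglyMeasurable (fun t => B (u t)) (volume.restrict (Set.Ioc (0 : ℝ) T)))
    -- V is bounded in L^r(0,T;A₁) for some r > 1
    (hVr : ∃ r : ℝ≥0∞, 1 < r ∧ ∃ K : ℝ, ∀ u ∈ U,
      eLpNorm (fun t => B (u t)) r (volume.restrict (Set.Ioc (0 : ℝ) T)) ≤ ENNReal.ofReal K)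
    -- each v = B∘u ∈ V satisfies v(t) = v(0) + ∫₀ᵗ w_v(s) ds with w_v ∈ L^{p₁}(0,T;A₁),
    -- and sup_{v ∈ V} ‖w_v‖_{L^{p₁}(0,T;A₁)} < ∞
    (hW : ∃ K : ℝ, ∀ u ∈ U, ∃ w : ℝ → A₁,
      IntegrableOn w (Set.Ioc (0 : ℝ) T) ∧
      (∀ᵐ t ∂volume.restrict (Set.Icc (0 : ℝ) T),
        B (u t) = B (u 0) + ∫ s in (0 : ℝ)..t, w s) ∧
      eLpNorm w p₁ (volume.restrict (Set.Ioc (0 : ℝ) T)) ≤ ENNReal.ofReal K) :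
    -- conclusion: every sequence in V has a subsequence whose continuous representatives
    -- converge uniformly on [0,T] in the norm of A₁
    ∀ u : ℕ → ℝ → A, (∀ n, u n ∈ U) →
      ∃ ψ : ℕ → ℕ, StrictMono ψ ∧ ∃ g : ℕ → ℝ → A₁,
        (∀ j, ContinuousOn (g j) (Set.Icc (0 : ℝ) T) ∧
          ∀ᵐ t ∂volume.restrict (Set.Icc (0 : ℝ) T), B (u (ψ j) t) = g j t) ∧
        ∃ L : ℝ → A₁, TendstoUniformlyOn g L atTop (Set.Icc (0 : ℝ) T) := by
    classical
  obtain ⟨K₁, hK₁⟩ := hU1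
  obtain ⟨K₂, hK₂⟩ := hW
  intro u hu
  choose w hwInt hwAE hwNorm using fun n => hK₂ (u n) (hu n)
  set e : ℝ := 1 - 1 / p₁.toReal with he_def
  have he : 0 < e := by
    rcases eq_or_ne p₁ ⊤ with h | h
    · simp [he_def, h]
    · have h1 : 1 < p₁.toReal := by
        rw [← ENNReal.toReal_one]
        exact (ENNReal.toReal_lt_toReal (by simp) h).mpr hp₁
      have h2 : 1 / p₁.toReal < 1 := by
        rw [div_lt_one (by linarith)]; linarith
      simp only [he_def]; linarith
  set Km : ℝ := max K₂ 0 with hKm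
  have hKm0 : 0 ≤ Km := le_max_right _ _
  set G : ℕ → ℝ → A₁ := fun n t => B (u n 0) + ∫ s in (0:ℝ)..t, w n s with hGdef
  -- modulus of continuity, ordered version
  have key : ∀ n, ∀ s t : ℝ, 0 ≤ s → s ≤ t → t ≤ T →
      ‖G n t - G n s‖ ≤ Km * |t - s| ^ e := by
    intro n s t hs hst htT
    have hit : IntervalIntegrable (w n) volume 0 t :=
      (intervalIntegrable_iff_integrableOn_Ioc_of_le (hs.trans hst)).2
        ((hwInt n).mono_set (Set.Ioc_subset_Ioc le_rfl htT))
    have his : IntervalIntegrable (w n) volume 0 s :=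
      (intervalIntegrable_iff_integrableOn_Ioc_of_le hs).2
        ((hwInt n).mono_set (Set.Ioc_subset_Ioc le_rfl (hst.trans htT)))
    have hdiff : G n t - G n s = ∫ x in s..t, w n x := by
      simp only [hGdef, add_sub_add_left_eq_sub]
      exact intervalIntegral.integral_interval_sub_left hit his
    have hEN := aux_holder T p₁ hp₁.le (w n) (hwInt n) K₂ (hwNorm n) hs hst htT
    rw [← hdiff] at hEN
    have hRHSne : ENNReal.ofReal K₂ * ENNReal.ofReal (t - s) ^ e ≠ ⊤ :=
      ENNReal.mul_ne_top ENNReal.ofReal_ne_top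
        (ENNReal.rpow_lt_top_of_nonneg he.le ENNReal.ofReal_ne_top).ne
    have hmono := ENNReal.toReal_mono hRHSne hEN
    rw [ENNReal.coe_toReal, coe_nnnorm] at hmono
    calc ‖G n t - G n s‖ ≤ (ENNReal.ofReal K₂ * ENNReal.ofReal (t - s) ^ e).toReal := hmono
      _ = Km * |t - s| ^ e := by
        rw [ENNReal.toReal_mul, ENNReal.ofReal_rpow_of_nonneg (by linarith) he.le,
          ENNReal.toReal_ofReal', ENNReal.toReal_ofReal',
          max_eq_left (Real.rpow_nonneg (by linarith) _), abs_of_nonneg (by linarith)]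
  have key' : ∀ n, ∀ s ∈ Set.Icc (0:ℝ) T, ∀ t ∈ Set.Icc (0:ℝ) T,
      ‖G n t - G n s‖ ≤ Km * |t - s| ^ e := by
    intro n s hs t ht
    rcases le_total s t with h | h
    · exact key n s t hs.1 h ht.2
    · rw [← norm_neg, neg_sub, abs_sub_comm]
      exact key n t s ht.1 h hs.2
  have contG : ∀ n, ContinuousOn (G n) (Set.Icc (0:ℝ) T) := by
    intro n
    rw [Metric.continuousOn_iff]
    intro b hb ε hε
    obtain ⟨δ, hδ0, hδ⟩ := aux_delta hKm0 he hε
    refine ⟨δ, hδ0, fun a ha hab => ?_⟩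
    rw [dist_eq_norm]
    exact lt_of_le_of_lt (key' n b hb a ha)
      (hδ _ (abs_nonneg _) (by rwa [Real.dist_eq] at hab))
  -- pointwise approximate compactness of values
  have cptval : ∀ ε : ℝ, 0 < ε → ∃ C : Set A₁, IsCompact C ∧
      ∀ n, ∀ t ∈ Set.Icc (0:ℝ) T, ∃ c ∈ C, dist (G n t) c < ε := by
    intro ε hε
    obtain ⟨δ, hδ0, hδ⟩ := aux_delta hKm0 he hε
    set δ' : ℝ := min δ T / 2 with hδ'def
    have hmin : 0 < min δ T := lt_min hδ0 hT
    have hδ'0 : 0 < δ' := by positivity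
    have hδ'δ : δ' < δ := by
      have : min δ T ≤ δ := min_le_left _ _
      rw [hδ'def]; linarith
    have hδ'T : δ' ≤ T := by
      have : min δ T ≤ T := min_le_right _ _
      rw [hδ'def]; linarith
    set M : ℝ := 2 * (|K₁| + 1) / δ' with hMdef
    have hM0 : 0 < M := by positivity
    refine ⟨closure (B '' Metric.closedBall 0 M), hB _ Metric.isBounded_closedBall, ?_⟩
    intro n t ht
    set c : ℝ := max t δ' with hcdef
    have hc1 : δ' ≤ c := le_max_right _ _
    have hcT : c ≤ T := max_le ht.2 hδ'T
    set J : Set ℝ := Set.Ioc (c - δ') c with hJdef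
    have hJsub : J ⊆ Set.Ioc 0 T := fun x hx =>
      ⟨by have := hx.1; linarith, le_trans hx.2 hcT⟩
    have hJIcc : J ⊆ Set.Icc (0:ℝ) T := fun x hx =>
      ⟨le_of_lt (hJsub hx).1, (hJsub hx).2⟩
    set μJ := volume.restrict J with hμJ
    have hμJuniv : μJ Set.univ = ENNReal.ofReal δ' := by
      rw [hμJ, Measure.restrict_apply_univ, hJdef, Real.volume_Ioc]
      norm_num
    have humeas : AEMeasurable (fun x => (‖u n x‖₊ : ℝ≥0∞)) μJ :=
      AEStronglyMeasurable.enorm ((hUmeas (u n) (hu n)).mono_measure (Measure.restrict_mono hJsub le_rfl))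
    have hcheb : μJ {x | ENNReal.ofReal M ≤ (‖u n x‖₊ : ℝ≥0∞)} ≤
        ENNReal.ofReal K₁ / ENNReal.ofReal M := by
      refine le_trans (meas_ge_le_lintegral_div humeas (by simp [hM0]) ENNReal.ofReal_ne_top) ?_
      gcongr
      refine le_trans ?_ (hK₁ (u n) (hu n))
      exact lintegral_mono' (Measure.restrict_mono hJsub le_rfl) le_rfl
    have hlt : ENNReal.ofReal K₁ / ENNReal.ofReal M < ENNReal.ofReal δ' := by
      rw [ENNReal.div_lt_iff (Or.inl (by simp [hM0])) (Or.inl ENNReal.ofReal_ne_top),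
        ← ENNReal.ofReal_mul hδ'0.le]
      refine lt_of_le_of_lt (ENNReal.ofReal_le_ofReal (le_abs_self K₁)) ?_
      rw [ENNReal.ofReal_lt_ofReal_iff (by positivity)]
      have hprod : δ' * M = 2 * (|K₁| + 1) := by
        rw [hMdef]; field_simp
      rw [hprod]
      linarith [abs_nonneg K₁]
    have haeJ : ∀ᵐ x ∂μJ, B (u n x) = G n x := by
      refine ae_restrict_of_ae_restrict_of_subset hJIcc ?_
      filter_upwards [hwAE n] with x hx
      rw [hGdef]; exact hx
    set Egood : Set ℝ := {x | (‖u n x‖₊ : ℝ≥0∞) < ENNReal.ofReal M ∧ B (u n x) = G n x}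
      with hEdef
    have hEpos : μJ Egood ≠ 0 := by
      intro h0
      have hcompl : Egoodᶜ ⊆ {x | ENNReal.ofReal M ≤ (‖u n x‖₊ : ℝ≥0∞)} ∪
          {x | ¬ B (u n x) = G n x} := by
        intro x hx
        rw [hEdef, Set.mem_compl_iff, Set.mem_setOf_eq, not_and_or, not_lt] at hx
        exact hx.imp (fun h => h) (fun h => h)
      have hbad : μJ Egoodᶜ ≤ ENNReal.ofReal K₁ / ENNReal.ofReal M := by
        refine le_trans (measure_mono hcompl) ?_
        refine le_trans (measure_union_le _ _) ?_
        rw [(ae_iff.1 haeJ : μJ {x | ¬ B (u n x) = G n x} = 0), add_zero]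
        exact hcheb
      have : μJ Set.univ ≤ μJ Egood + μJ Egoodᶜ := by
        refine le_trans (measure_mono ?_) (measure_union_le _ _)
        rw [Set.union_compl_self]
      rw [h0, zero_add, hμJuniv] at this
      exact absurd (lt_of_le_of_lt (le_trans this hbad) hlt) (lt_irrefl _)
    have hEJ : (Egood ∩ J).Nonempty := by
      rw [Set.nonempty_iff_ne_empty]
      intro hemp
      apply hEpos
      have hsubc : Egood ⊆ Jᶜ := by
        intro x hx
        intro hxJ
        exact Set.eq_empty_iff_forall_notMem.1 hemp x ⟨hx, hxJ⟩
      refine le_antisymm (le_trans (measure_mono hsubc) ?_) (zero_le)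
      rw [hμJ, Measure.restrict_apply (measurableSet_Ioc.compl)]
      simp [hJdef]
    obtain ⟨x, hxE, hxJ⟩ := hEJ
    have hxnorm : ‖u n x‖ ≤ M := by
      have := hxE.1
      change ‖u n x‖ₑ < _ at this
      rw [← ofReal_norm] at this
      exact le_of_lt ((ENNReal.ofReal_lt_ofReal_iff_of_nonneg (norm_nonneg _)).1 this)
    refine ⟨G n x, subset_closure ⟨u n x, Metric.mem_closedBall.2 ?_, hxE.2⟩, ?_⟩
    · rw [dist_zero_right]; exact hxnorm
    · rw [dist_eq_norm]
      have hmaxle : c ≤ t + δ' := max_le (by linarith) (by linarith [ht.1])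
      have habs : |t - x| < δ := by
        rw [abs_lt]
        constructor
        · have h2 : x ≤ c := hxJ.2
          linarith
        · have h1 : c - δ' < x := hxJ.1
          have h3 : t ≤ c := le_max_left _ _
          linarith
      exact lt_of_le_of_lt (key' n x (hJIcc hxJ) t ht) (hδ _ (abs_nonneg _) habs)
  -- totally bounded set of values
  set D : Set A₁ := ⋃ n, G n '' Set.Icc (0:ℝ) T with hD
  have hDtb : TotallyBounded D := by
    rw [Metric.totallyBounded_iff]
    intro ε hε
    obtain ⟨C, hCc, hC⟩ := cptval (ε/2) (by positivity)
    obtain ⟨net, hnetfin, hnet⟩ := Metric.totallyBounded_iff.1 hCc.totallyBounded (ε/2)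
      (by positivity)
    refine ⟨net, hnetfin, ?_⟩
    rintro x hx
    obtain ⟨n, t, ht, rfl⟩ : ∃ n t, t ∈ Set.Icc (0:ℝ) T ∧ G n t = x := by
      simpa [hD, Set.mem_iUnion, Set.mem_image] using hx
    obtain ⟨c, hcC, hdc⟩ := hC n t ht
    obtain ⟨y, hy, hcy⟩ := Set.mem_iUnion₂.1 (hnet hcC)
    refine Set.mem_iUnion₂.2 ⟨y, hy, ?_⟩
    have : dist c y < ε/2 := hcy
    rw [Metric.mem_ball]
    calc dist (G n t) y ≤ dist (G n t) c + dist c y := dist_triangle _ _ _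
      _ < ε/2 + ε/2 := add_lt_add hdc this
      _ = ε := by ring
  have hsD : IsCompact (closure D) :=
    isCompact_iff_totallyBounded_isComplete.2 ⟨hDtb.closure, isClosed_closure.isComplete⟩
  -- Arzela-Ascoli
  haveI : CompactSpace (Set.Icc (0:ℝ) T) := isCompact_iff_compactSpace.mp isCompact_Icc
  have contX : ∀ n, Continuous fun x : Set.Icc (0:ℝ) T => G n ↑x :=
    fun n => ContinuousOn.restrict (contG n)
  set F : ℕ → BoundedContinuousFunction (Set.Icc (0:ℝ) T) A₁ := fun n =>
    BoundedContinuousFunction.mkOfCompact ⟨fun x => G n ↑x, contX n⟩ with hF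
  have hin : ∀ (f : BoundedContinuousFunction (Set.Icc (0:ℝ) T) A₁)
      (x : Set.Icc (0:ℝ) T), f ∈ Set.range F → f x ∈ closure D := by
    rintro f x ⟨n, rfl⟩
    exact subset_closure (Set.mem_iUnion.2 ⟨n, Set.mem_image_of_mem _ x.2⟩)
  have hequi : Equicontinuous ((↑) : Set.range F → Set.Icc (0:ℝ) T → A₁) := by
    intro x
    rw [Metric.equicontinuousAt_iff]
    intro ε hε
    obtain ⟨δ, hδ0, hδ⟩ := aux_delta hKm0 he hε
    refine ⟨δ, hδ0, fun y hy i => ?_⟩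
    obtain ⟨n, hn⟩ := i.2
    have hival : ∀ z : Set.Icc (0:ℝ) T, (i : Set.Icc (0:ℝ) T → A₁) z = G n ↑z := by
      intro z; rw [← hn]; rfl
    rw [hival x, hival y, dist_eq_norm]
    have hxy : |(x:ℝ) - (y:ℝ)| < δ := by
      rw [← Real.dist_eq]
      rw [Subtype.dist_eq] at hy
      exact (dist_comm (y:ℝ) (x:ℝ)) ▸ hy
    exact lt_of_le_of_lt (key' n ↑y y.2 ↑x x.2) (hδ _ (abs_nonneg _) hxy)
  have hcpt : IsCompact (closure (Set.range F)) :=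
    BoundedContinuousFunction.arzela_ascoli (closure D) hsD (Set.range F) hin hequi
  obtain ⟨L₀, _, ψ, hψ, hconv⟩ :=
    hcpt.isSeqCompact (fun n => subset_closure (Set.mem_range_self n))
  refine ⟨ψ, hψ, fun j => G (ψ j), fun j => ⟨contG (ψ j), ?_⟩, ?_⟩
  · filter_upwards [hwAE (ψ j)] with t htt
    rw [hGdef]; exact htt
  refine ⟨fun t => if h : t ∈ Set.Icc (0:ℝ) T then L₀ ⟨t, h⟩ else 0, ?_⟩
  rw [Metric.tendstoUniformlyOn_iff]
  intro ε hε
  obtain ⟨N, hN⟩ := Metric.tendsto_atTop.1 hconv ε hε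
  filter_upwards [Filter.eventually_ge_atTop N] with j hj
  intro t ht
  rw [dif_pos ht]
  calc dist (L₀ ⟨t, ht⟩) (G (ψ j) t)
      = dist (L₀ ⟨t, ht⟩) ((F (ψ j)) ⟨t, ht⟩) := rfl
    _ ≤ dist L₀ (F (ψ j)) := BoundedContinuousFunction.dist_coe_le_dist _
    _ < ε := by rw [dist_comm]; exact hN j hj
end
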